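/- For all integers p, q, r: if p is even then x_{p,q,r} ▷ e = x_{p−1,−q,−r+1} and x_{p,q,r} ▷ f = x_{p+1,−q,−r+1}; if p is odd then x_{p,q,r} ▷ e = x_{p+1,−q,−r+1} and x_{p,q,r} ▷ f = x_{p−1,−q,−r+1}. -/
import Mathlib


/-- A quandle as in the paper: a set with operations `▷` and `▷⁻¹` satisfying
axioms A1, A2, A3. -/
class PaperQuandle (Q : Type*) where
  rhd : Q → Q → Q
  rhdInv : Q → Q → Q
  fix : ∀ x : Q, rhd x x = x
  inv_rhd : ∀ x y : Q, rhdInv (rhd x y) y = x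
  rhd_inv : ∀ x y : Q, rhd (rhdInv x y) y = x
  self_distrib : ∀ x y z : Q, rhd (rhd x y) z = rhd (rhd x z) (rhd y z)

infixl:65 " ▷ " => PaperQuandle.rhd
infixl:65 " ▷⁻¹ " => PaperQuandle.rhdInv

/-- The point symmetry at `u`, as a permutation of `Q`: `x ↦ x ▷ u`,
with inverse `x ↦ x ▷⁻¹ u`. -/
def ptSym {Q : Type*} [PaperQuandle Q] (u : Q) : Equiv.Perm Q where
  toFun x := x ▷ u
  invFun x := x ▷⁻¹ u
  left_inv x := PaperQuandle.inv_rhd x u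
  right_inv x := PaperQuandle.rhd_inv x u

/-- The element `x_{p,q,r} = a^{(ba)^t c^q d^r}` if `p = 2t`, and
`a^{(ba)^t b c^q d^r}` if `p = 2t+1`.  Here the word `ba` (apply `b`, then `a`)
is the permutation `ptSym a * ptSym b`. -/
def X {Q : Type*} [PaperQuandle Q] (a b c d : Q) (p q r : ℤ) : Q :=
  if Even p then
    (ptSym d ^ r) ((ptSym c ^ q) (((ptSym a * ptSym b) ^ (p / 2)) a))
  else
    (ptSym d ^ r) ((ptSym c ^ q) ((((ptSym a * ptSym b) ^ ((p - 1) / 2)) a) ▷ b))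

section Helpers

variable {G : Type*} [Group G]

private lemma conj_move {g x y : G} (hg : g * g = 1) (h : g * x * g = y) (n : ℤ) :
    g * x ^ n = y ^ n * g := by
  have hgi : g⁻¹ = g := inv_eq_of_mul_eq_one_right hg
  have h1 : g * x * g⁻¹ = y := by rw [hgi]; exact h
  have h2 : (g * x * g⁻¹) ^ n = g * x ^ n * g⁻¹ := conj_zpow
  rw [h1, hgi] at h2
  have h3 : y ^ n * g = g * x ^ n * (g * g) := by rw [h2]; group
  rw [h3, hg, mul_one]

private lemma conj_move' {g x y : G} (hg : g * g = 1) (h : g * x * g = y) (n : ℤ) :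
    g * x ^ n * g = y ^ n := by
  rw [conj_move hg h n, mul_assoc, hg, mul_one]

private lemma core (k : ℤ) {A B C D E F : G}
    (hA2 : A * A = 1) (hB2 : B * B = 1) (hE2 : E * E = 1) (hF2 : F * F = 1)
    (hAED : A * E * D = 1) (hFDB : F * D * B = 1)
    (hCke : E * (A * ((B * A) ^ k * C)) = 1) :
    (∀ nr nq : ℤ, E * (D ^ nr * C ^ nq) = D ^ (-nr + 1) * (C ^ (-nq) * A)) ∧
    (∀ nr nq : ℤ, F * (D ^ nr * C ^ nq) = D ^ (-nr + 1) * (C ^ (-nq) * B)) ∧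
    (∀ t : ℤ, A * (A * B) ^ t = (B * A) ^ t * A) ∧
    (∀ t : ℤ, B * (A * B) ^ t = (B * A) ^ t * B) := by
  have hAi : A⁻¹ = A := inv_eq_of_mul_eq_one_right hA2
  have hBi : B⁻¹ = B := inv_eq_of_mul_eq_one_right hB2
  have hEeq : E = A * D⁻¹ := by
    have h1 : E = A⁻¹ * (A * E * D) * D⁻¹ := by group
    rw [hAED, mul_one, hAi] at h1; exact h1
  have hFeq : F = B * D⁻¹ := by
    have h1 : F = F * D * B * B⁻¹ * D⁻¹ := by group
    rw [hFDB, one_mul, hBi] at h1; exact h1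
  have hADiA : A * D⁻¹ * A = D := by
    have h := hE2; rw [hEeq] at h
    have h2 : A * D⁻¹ * A = A * D⁻¹ * (A * D⁻¹) * D := by group
    rw [h, one_mul] at h2; exact h2
  have hBDiB : B * D⁻¹ * B = D := by
    have h := hF2; rw [hFeq] at h
    have h2 : B * D⁻¹ * B = B * D⁻¹ * (B * D⁻¹) * D := by group
    rw [h, one_mul] at h2; exact h2
  have hADA : A * D * A = D⁻¹ := by
    have h5 : (A * D⁻¹ * A)⁻¹ = D⁻¹ := by rw [hADiA]
    calc A * D * A = A⁻¹ * D⁻¹⁻¹ * A⁻¹ := by rw [hAi, inv_inv]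
      _ = (A * D⁻¹ * A)⁻¹ := by group
      _ = D⁻¹ := h5
  have hBDB : B * D * B = D⁻¹ := by
    have h5 : (B * D⁻¹ * B)⁻¹ = D⁻¹ := by rw [hBDiB]
    calc B * D * B = B⁻¹ * D⁻¹⁻¹ * B⁻¹ := by rw [hBi, inv_inv]
      _ = (B * D⁻¹ * B)⁻¹ := by group
      _ = D⁻¹ := h5
  have hADr : ∀ n : ℤ, A * D ^ n = D ^ (-n) * A := by
    intro n
    have h := conj_move hA2 hADA n
    rwa [inv_zpow, ← zpow_neg] at h
  have hBDr : ∀ n : ℤ, B * D ^ n = D ^ (-n) * B := by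
    intro n
    have h := conj_move hB2 hBDB n
    rwa [inv_zpow, ← zpow_neg] at h
  have hCeq : C = (A * B) ^ k * D⁻¹ := by
    have h1 : C = ((B * A) ^ k)⁻¹ * (A⁻¹ * (E⁻¹ * (E * (A * ((B * A) ^ k * C))))) := by group
    rw [hCke, mul_one, hAi, hEeq] at h1
    have h2 : A * (A * D⁻¹)⁻¹ = D⁻¹ := by
      rw [mul_inv_rev, inv_inv, hAi, ← mul_assoc, hADA]
    rw [h2] at h1
    rwa [← inv_zpow, mul_inv_rev, hAi, hBi] at h1
  have hDBA : D * (B * A) = (B * A) * D := by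
    have hDB : D * B = B * D⁻¹ := by
      calc D * B = B * B * D * B := by rw [hB2, one_mul]
        _ = B * (B * D * B) := by group
        _ = B * D⁻¹ := by rw [hBDB]
    have hDA : D⁻¹ * A = A * D := by
      calc D⁻¹ * A = (A * D * A) * A := by rw [hADA]
        _ = A * D * (A * A) := by group
        _ = A * D := by rw [hA2, mul_one]
    calc D * (B * A) = (D * B) * A := by group
      _ = B * (D⁻¹ * A) := by rw [hDB, mul_assoc]
      _ = B * (A * D) := by rw [hDA]
      _ = (B * A) * D := by group
  have hc : Commute D (B * A) := hDBA
  have hCinv : C⁻¹ = (B * A) ^ k * D := by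
    rw [hCeq, mul_inv_rev, inv_inv, ← inv_zpow, mul_inv_rev, hAi, hBi]
    exact hc.zpow_right k
  have c1 : A * (A * B) * A = B * A := by
    rw [← mul_assoc, hA2, one_mul]
  have c1b : B * (A * B) * B = B * A := by
    rw [mul_assoc, mul_assoc, hB2, mul_one]
  have c2 := conj_move' hA2 c1 k
  have c2b := conj_move' hB2 c1b k
  have hACA : A * C * A = C⁻¹ := by
    have h7 : A * C * A = A * (A * B) ^ k * A * (A * D⁻¹ * A) := by
      rw [hCeq]
      have h8 : A * (A * B) ^ k * A * (A * D⁻¹ * A) =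
          A * (A * B) ^ k * (A * A) * (D⁻¹ * A) := by group
      rw [h8, hA2, mul_one]; group
    rw [h7, c2, hADiA]; exact hCinv.symm
  have hBCB : B * C * B = C⁻¹ := by
    have h7 : B * C * B = B * (A * B) ^ k * B * (B * D⁻¹ * B) := by
      rw [hCeq]
      have h8 : B * (A * B) ^ k * B * (B * D⁻¹ * B) =
          B * (A * B) ^ k * (B * B) * (D⁻¹ * B) := by group
      rw [h8, hB2, mul_one]; group
    rw [h7, c2b, hBDiB]; exact hCinv.symm
  have hACq : ∀ n : ℤ, A * C ^ n = C ^ (-n) * A := by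
    intro n
    have h := conj_move hA2 hACA n
    rwa [inv_zpow, ← zpow_neg] at h
  have hBCq : ∀ n : ℤ, B * C ^ n = C ^ (-n) * B := by
    intro n
    have h := conj_move hB2 hBCB n
    rwa [inv_zpow, ← zpow_neg] at h
  refine ⟨fun nr nq => ?_, fun nr nq => ?_, conj_move hA2 c1, conj_move hB2 c1b⟩
  · rw [hEeq]
    calc A * D⁻¹ * (D ^ nr * C ^ nq) = A * D ^ (nr - 1) * C ^ nq := by group
      _ = D ^ (-(nr - 1)) * A * C ^ nq := by rw [hADr]
      _ = D ^ (-(nr - 1)) * (C ^ (-nq) * A) := by rw [mul_assoc, hACq]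
      _ = D ^ (-nr + 1) * (C ^ (-nq) * A) := by rw [show -(nr - 1) = -nr + 1 by ring]
  · rw [hFeq]
    calc B * D⁻¹ * (D ^ nr * C ^ nq) = B * D ^ (nr - 1) * C ^ nq := by group
      _ = D ^ (-(nr - 1)) * B * C ^ nq := by rw [hBDr]
      _ = D ^ (-(nr - 1)) * (C ^ (-nq) * B) := by rw [mul_assoc, hBCq]
      _ = D ^ (-nr + 1) * (C ^ (-nq) * B) := by rw [show -(nr - 1) = -nr + 1 by ring]

end Helpers

theorem stmt_15
    {Q : Type*} [PaperQuandle Q] (k : ℤ) (m n : ℕ) (a b c d e f : Q)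
    (hk : 1 ≤ k) (hm : 0 < m) (hn : 0 < n)
    (rel_a : ∀ x : Q, x ▷ a ▷ a = x)
    (rel_b : ∀ x : Q, x ▷ b ▷ b = x)
    (rel_e : ∀ x : Q, x ▷ e ▷ e = x)
    (rel_f : ∀ x : Q, x ▷ f ▷ f = x)
    (rel_c : ∀ x : Q, (ptSym c ^ m) x = x)
    (rel_d : ∀ x : Q, (ptSym d ^ n) x = x)
    (rel_dea : ∀ x : Q, x ▷ d ▷ e ▷ a = x)
    (rel_bdf : ∀ x : Q, x ▷ b ▷ d ▷ f = x)
    (rel_cke : ∀ x : Q, (((ptSym b * ptSym a) ^ k) (x ▷ c)) ▷ a ▷ e = x)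
    (rel_fca : ∀ x : Q, (((ptSym b * ptSym a) ^ (k - 1)) (x ▷ f ▷ c)) ▷ a = x) :
    ∀ p q r : ℤ,
      (Even p → X a b c d p q r ▷ e = X a b c d (p - 1) (-q) (-r + 1) ∧
        X a b c d p q r ▷ f = X a b c d (p + 1) (-q) (-r + 1)) ∧
      (Odd p → X a b c d p q r ▷ e = X a b c d (p + 1) (-q) (-r + 1) ∧
        X a b c d p q r ▷ f = X a b c d (p - 1) (-q) (-r + 1)) := by
  intro p q r
  have hA2 : ptSym a * ptSym a = 1 := Equiv.ext fun x => rel_a x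
  have hB2 : ptSym b * ptSym b = 1 := Equiv.ext fun x => rel_b x
  have hE2 : ptSym e * ptSym e = 1 := Equiv.ext fun x => rel_e x
  have hF2 : ptSym f * ptSym f = 1 := Equiv.ext fun x => rel_f x
  have hAED : ptSym a * ptSym e * ptSym d = 1 := Equiv.ext fun x => rel_dea x
  have hFDB : ptSym f * ptSym d * ptSym b = 1 := Equiv.ext fun x => rel_bdf x
  have hCke : ptSym e * (ptSym a * ((ptSym b * ptSym a) ^ k * ptSym c)) = 1 :=
    Equiv.ext fun x => rel_cke x
  obtain ⟨stepE, stepF, hAT, hBT⟩ := core k hA2 hB2 hE2 hF2 hAED hFDB hCke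
  have ha : ptSym a a = a := PaperQuandle.fix a
  have hb2' : ∀ z : Q, ptSym b (ptSym b z) = z := fun z => rel_b z
  have stepE' : ∀ (nr nq : ℤ) (z : Q),
      ptSym e ((ptSym d ^ nr) ((ptSym c ^ nq) z)) =
        (ptSym d ^ (-nr + 1)) ((ptSym c ^ (-nq)) (ptSym a z)) := by
    intro nr nq z
    have h := DFunLike.congr_fun (stepE nr nq) z
    simpa [Equiv.Perm.mul_apply] using h
  have stepF' : ∀ (nr nq : ℤ) (z : Q),
      ptSym f ((ptSym d ^ nr) ((ptSym c ^ nq) z)) =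
        (ptSym d ^ (-nr + 1)) ((ptSym c ^ (-nq)) (ptSym b z)) := by
    intro nr nq z
    have h := DFunLike.congr_fun (stepF nr nq) z
    simpa [Equiv.Perm.mul_apply] using h
  have keyAB : ∀ t : ℤ,
      ptSym a (((ptSym a * ptSym b) ^ t) a) =
        ptSym b (((ptSym a * ptSym b) ^ (t - 1)) a) := by
    intro t
    have l1 := DFunLike.congr_fun (hAT t) a
    have l2 := DFunLike.congr_fun (hBT (t - 1)) a
    simp only [Equiv.Perm.mul_apply] at l1 l2
    rw [ha] at l1
    rw [l1, l2]
    have l3 : (ptSym b * ptSym a) ^ t =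
        (ptSym b * ptSym a) ^ (t - 1) * (ptSym b * ptSym a) := by
      rw [← zpow_add_one]
      norm_num
    rw [l3]
    simp only [Equiv.Perm.mul_apply]
    rw [ha]
  have keyT : ∀ t : ℤ,
      ptSym a (ptSym b (((ptSym a * ptSym b) ^ t) a)) =
        ((ptSym a * ptSym b) ^ (t + 1)) a := by
    intro t
    have l3 : (ptSym a * ptSym b) ^ (t + 1) =
        (ptSym a * ptSym b) * (ptSym a * ptSym b) ^ t := by
      rw [add_comm, zpow_add, zpow_one]
    rw [l3]
    simp [Equiv.Perm.mul_apply]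
  have ap : ∀ (u x : Q), x ▷ u = ptSym u x := fun _ _ => rfl
  refine ⟨fun hp => ?_, fun hp => ?_⟩
  · obtain ⟨t, ht⟩ := id hp
    have e1 : ¬ Even (p - 1) := by rintro ⟨s, hs⟩; omega
    have e2 : ¬ Even (p + 1) := by rintro ⟨s, hs⟩; omega
    constructor
    · simp only [X, if_pos hp, if_neg e1]
      rw [show p / 2 = t by omega, show (p - 1 - 1) / 2 = t - 1 by omega]
      simp only [ap]
      rw [stepE', keyAB]
    · simp only [X, if_pos hp, if_neg e2]
      rw [show p / 2 = t by omega, show (p + 1 - 1) / 2 = t by omega]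
      simp only [ap]
      rw [stepF']
  · obtain ⟨t, ht⟩ := id hp
    have e0 : ¬ Even p := by rintro ⟨s, hs⟩; omega
    have e1 : Even (p - 1) := ⟨t, by omega⟩
    have e2 : Even (p + 1) := ⟨t + 1, by omega⟩
    constructor
    · simp only [X, if_neg e0, if_pos e2]
      rw [show (p - 1) / 2 = t by omega, show (p + 1) / 2 = t + 1 by omega]
      simp only [ap]
      rw [stepE', keyT]
    · simp only [X, if_neg e0, if_pos e1]
      rw [show (p - 1) / 2 = t by omega]
      simp only [ap]
      rw [stepF', hb2']
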